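/- Let d ≥ 1, let g : ℝ^d → ℝ be continuous, let h : ℝ^d → [0,∞), let ℓ ∈ ℝ and r > 0. Assume: (a) at least three distinct unbounded connected components of {x : g(x) ≥ ℓ} intersect the open ball B_r; (b) g(x) + h(x) ≥ ℓ for all x ∈ B_r; and (c) there exists R' > 0 such that {x : g(x) ≥ ℓ} ∖ B_{R'} and {x : g(x) + h(x) ≥ ℓ} ∖ B_{R'} are percolation equivalent. Then there exists R > 0 such that the origin 0 is an R-coarse trifurcation point of the set {x : g(x) + h(x) ≥ ℓ}. -/

import Mathlib

open MeasureTheory Metric Bornology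
open scoped ENNReal NNReal

noncomputable section

/-- Euclidean space `ℝ^d`. -/
abbrev Ed (d : ℕ) := EuclideanSpace ℝ (Fin d)

/-- Translation of a continuous function on `ℝ^d` by `y`: `g ↦ g(· + y)`. -/
def translateCM {d : ℕ} (y : Ed d) (g : C(Ed d, ℝ)) : C(Ed d, ℝ) :=
  ⟨fun x => g (x + y), g.continuous.comp (continuous_add_right y)⟩

/-- `μ` is a centered Gaussian field on continuous functions `ℝ^d → ℝ` with covariance
kernel `κ`: all finite linear combinations of point evaluations are centered Gaussian,
with the variance prescribed by `κ`. -/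
def IsGaussianField {d : ℕ} [MeasurableSpace C(Ed d, ℝ)]
    (μ : Measure C(Ed d, ℝ)) (κ : Ed d → ℝ) : Prop :=
  ∀ (n : ℕ) (x : Fin n → Ed d) (t : Fin n → ℝ),
    μ.map (fun g => ∑ i, t i * g (x i)) =
      ProbabilityTheory.gaussianReal 0 (∑ i, ∑ j, t i * t j * κ (x i - x j)).toNNReal

/-- Stationarity: the law is invariant under all translations. -/
def IsStationaryField {d : ℕ} [MeasurableSpace C(Ed d, ℝ)]
    (μ : Measure C(Ed d, ℝ)) : Prop :=
  ∀ y : Ed d, μ.map (translateCM y) = μ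

/-- Ergodicity: every Borel event invariant under all translations has measure 0 or 1. -/
def IsErgodicField {d : ℕ} [MeasurableSpace C(Ed d, ℝ)]
    (μ : Measure C(Ed d, ℝ)) : Prop :=
  ∀ s : Set C(Ed d, ℝ), MeasurableSet s → (∀ y : Ed d, translateCM y ⁻¹' s = s) →
    μ s = 0 ∨ μ s = 1

/-- First partial derivative `∂ᵢ κ (x)`. -/
def pderiv1 {d : ℕ} (κ : Ed d → ℝ) (i : Fin d) (x : Ed d) : ℝ :=
  fderiv ℝ κ x (EuclideanSpace.single i 1)

/-- Second partial derivative `∂ᵢ∂ⱼ κ (x)`. -/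
def pderiv2 {d : ℕ} (κ : Ed d → ℝ) (i j : Fin d) (x : Ed d) : ℝ :=
  fderiv ℝ (fun y => fderiv ℝ κ y (EuclideanSpace.single i 1)) x (EuclideanSpace.single j 1)

/-- The `(d+1) × (d+1)` covariance matrix of `(f(0), ∇f(0))`:
`Σ₀₀ = κ(0)`, `Σ₀ᵢ = Σᵢ₀ = ∂ᵢκ(0)`, `Σᵢⱼ = -∂ᵢ∂ⱼκ(0)`. -/
def covMatrix {d : ℕ} (κ : Ed d → ℝ) : Matrix (Fin (d + 1)) (Fin (d + 1)) ℝ :=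
  Matrix.of fun i j =>
    Fin.cases
      (Fin.cases (κ 0) (fun j' => pderiv1 κ j' 0) j)
      (fun i' => Fin.cases (pderiv1 κ i' 0) (fun j' => - pderiv2 κ i' j' 0) j) i

/-- The set of unbounded connected components of `S ⊆ ℝ^d`. -/
def unbddComps {d : ℕ} (S : Set (Ed d)) : Set (Set (Ed d)) :=
  {C | (∃ x ∈ S, C = connectedComponentIn S x) ∧ ¬ IsBounded C}

/-- `S` has at most one unbounded connected component. -/
def AtMostOneUnbounded {d : ℕ} (S : Set (Ed d)) : Prop :=
  ∀ C₁ ∈ unbddComps S, ∀ C₂ ∈ unbddComps S, C₁ = C₂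

/-- Number of connected components of `S`, valued in `ℕ∞`. -/
def numComponents {d : ℕ} (S : Set (Ed d)) : ℕ∞ :=
  {C : Set (Ed d) | ∃ x ∈ S, C = connectedComponentIn S x}.encard

/-- Percolation equivalence of `A ⊆ B`: the inclusion induces a bijection between
connected components, matching bounded components with bounded components. -/
def PercEquiv {d : ℕ} (A B : Set (Ed d)) : Prop :=
  A ⊆ B ∧
  (∀ x ∈ A, ∀ y ∈ A, connectedComponentIn B x = connectedComponentIn B y →
    connectedComponentIn A x = connectedComponentIn A y) ∧
  (∀ y ∈ B, ∃ x ∈ A, connectedComponentIn B y = connectedComponentIn B x) ∧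
  (∀ x ∈ A, (IsBounded (connectedComponentIn A x) ↔ IsBounded (connectedComponentIn B x)))

/-- `x` is an `R`-coarse trifurcation point of `S`: the component of `x` in `S` is
unbounded and, after removing the ball `B_R(x)`, it contains at least three distinct
unbounded connected components. -/
def IsCoarseTrifurcation {d : ℕ} (S : Set (Ed d)) (R : ℝ) (x : Ed d) : Prop :=
  x ∈ S ∧ ¬ IsBounded (connectedComponentIn S x) ∧
    3 ≤ (unbddComps (connectedComponentIn S x \ ball x R)).encard

end

section Helpers

open Metric Bornology Set

/-- In a compact Hausdorff space, any open set containing the connected component of a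
point contains a clopen set containing that point. -/
theorem aux_exists_isClopen_between {X : Type*} [TopologicalSpace X] [T2Space X]
    [CompactSpace X] (x : X) {U : Set X} (hU : IsOpen U)
    (hcc : connectedComponent x ⊆ U) :
    ∃ V : Set X, IsClopen V ∧ x ∈ V ∧ V ⊆ U := by
  let N := { s : Set X // IsClopen s ∧ x ∈ s }
  haveI : Nonempty N := ⟨⟨Set.univ, isClopen_univ, Set.mem_univ x⟩⟩
  have hdir : Directed (· ⊇ ·) fun s : N => s.val := by
    rintro ⟨s, hs, hxs⟩ ⟨t, ht, hxt⟩
    exact ⟨⟨s ∩ t, hs.inter ht, ⟨hxs, hxt⟩⟩, Set.inter_subset_left, Set.inter_subset_right⟩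
  have hNcl : ∀ s : N, IsClosed s.val := fun s => s.2.1.1
  have h_nhd : ∀ y ∈ ⋂ s : N, s.val, U ∈ nhds y := by
    intro y hy
    have hyc : y ∈ connectedComponent x := by
      rw [connectedComponent_eq_iInter_isClopen]
      exact hy
    exact hU.mem_nhds (hcc hyc)
  obtain ⟨⟨s, hs, hxs⟩, hsU⟩ := exists_subset_nhds_of_compactSpace hdir hNcl h_nhd
  exact ⟨s, hs, hxs, hsU⟩

theorem aux_isClosed_connectedComponentIn {X : Type*} [TopologicalSpace X] {F : Set X}
    (hF : IsClosed F) {x : X} : IsClosed (connectedComponentIn F x) := by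
  by_cases hx : x ∈ F
  · rw [connectedComponentIn_eq_image hx]
    exact hF.isClosedEmbedding_subtypeVal.isClosedMap _ isClosed_connectedComponent
  · rw [connectedComponentIn_eq_empty hx]
    exact isClosed_empty

/-- If the component of `p` in a closed set `A ⊆ ℝ^d` is bounded, then `p` lies in a
bounded subset of `A` which is compact and open in `A`. -/
theorem aux_bounded_clopen_piece {d : ℕ} {A : Set (Ed d)} (hA : IsClosed A) {p : Ed d}
    (hp : p ∈ A) (hbd : IsBounded (connectedComponentIn A p)) :
    ∃ U V : Set (Ed d), IsOpen U ∧ V = U ∩ A ∧ IsCompact V ∧ IsBounded V ∧ p ∈ V := by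
  obtain ⟨n, hn⟩ := hbd.subset_ball (0 : Ed d)
  set D := connectedComponentIn A p with hD
  set W := A ∩ closedBall (0 : Ed d) n with hW
  have hWc : IsCompact W := (isCompact_closedBall _ _).inter_left hA
  have hpD : p ∈ D := mem_connectedComponentIn hp
  have hDW : D ⊆ W := fun z hz => ⟨connectedComponentIn_subset A p hz,
    ball_subset_closedBall (hn hz)⟩
  have hpW : p ∈ W := hDW hpD
  have hDeq : D = connectedComponentIn W p := by
    apply Subset.antisymm
    · exact isPreconnected_connectedComponentIn.subset_connectedComponentIn hpD hDW
    · exact connectedComponentIn_mono p inter_subset_left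
  haveI : CompactSpace ↥W := isCompact_iff_compactSpace.mp hWc
  have himg : connectedComponentIn W p = (↑) '' connectedComponent (⟨p, hpW⟩ : W) :=
    connectedComponentIn_eq_image hpW
  have hccU : connectedComponent (⟨p, hpW⟩ : W) ⊆
      (Subtype.val : W → Ed d) ⁻¹' (ball (0 : Ed d) n) := by
    intro z hz
    have hzD : (z : Ed d) ∈ D := by
      rw [hDeq, himg]
      exact mem_image_of_mem _ hz
    exact hn hzD
  obtain ⟨Vs, hVs, hxVs, hVsU⟩ := aux_exists_isClopen_between (⟨p, hpW⟩ : W)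
    (isOpen_ball.preimage continuous_subtype_val) hccU
  obtain ⟨U₁, hU₁, hU₁eq⟩ := isOpen_induced_iff.mp hVs.2
  refine ⟨U₁ ∩ ball (0 : Ed d) n, (Subtype.val : W → Ed d) '' Vs,
    hU₁.inter isOpen_ball, ?_, ?_, ?_, ?_⟩
  · have h1 : (Subtype.val : W → Ed d) '' Vs = U₁ ∩ W := by
      rw [← hU₁eq, Subtype.image_preimage_coe, inter_comm]
    have hsubball : (Subtype.val : W → Ed d) '' Vs ⊆ ball (0 : Ed d) n := by
      rintro - ⟨z, hz, rfl⟩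
      exact hVsU hz
    apply Subset.antisymm
    · intro z hz
      refine ⟨⟨(h1 ▸ hz).1, hsubball hz⟩, (h1 ▸ hz).2.1⟩
    · rintro z ⟨⟨hz1, hz2⟩, hz3⟩
      rw [h1]
      exact ⟨hz1, hz3, ball_subset_closedBall hz2⟩
  · exact (hVs.1.isCompact).image continuous_subtype_val
  · have : (Subtype.val : W → Ed d) '' Vs ⊆ ball (0 : Ed d) n := by
      rintro - ⟨z, hz, rfl⟩
      exact hVsU hz
    exact isBounded_ball.subset this
  · exact ⟨⟨p, hpW⟩, hxVs, rfl⟩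

/-- A closed, preconnected, unbounded subset of `ℝ^d` has an unbounded connected
component outside any ball. -/
theorem aux_exists_unbounded_comp_outside {d : ℕ} {C : Set (Ed d)} (hCcl : IsClosed C)
    (hCpc : IsPreconnected C) (hCunb : ¬ IsBounded C) (R : ℝ) :
    ∃ x ∈ C \ ball (0 : Ed d) R,
      ¬ IsBounded (connectedComponentIn (C \ ball (0 : Ed d) R) x) := by
  by_contra hcon
  push_neg at hcon
  set A := C \ ball (0 : Ed d) R with hAdef
  have hAcl : IsClosed A := hCcl.sdiff isOpen_ball
  have hCne : C.Nonempty := by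
    rcases Set.eq_empty_or_nonempty C with hrfl | hne
    · exact absurd (hrfl ▸ Bornology.isBounded_empty) hCunb
    · exact hne
  by_cases hcb : (C ∩ closedBall (0 : Ed d) R) = ∅
  · -- then A = C and the whole component of any point is C itself, unbounded
    obtain ⟨c, hc⟩ := hCne
    have hcA : c ∈ A := ⟨hc, fun hb => (Set.eq_empty_iff_forall_notMem.mp hcb c)
      ⟨hc, ball_subset_closedBall hb⟩⟩
    have hAC : A = C := by
      apply Subset.antisymm diff_subset
      intro z hz
      exact ⟨hz, fun hb => (Set.eq_empty_iff_forall_notMem.mp hcb z)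
        ⟨hz, ball_subset_closedBall hb⟩⟩
    have := hcon c hcA
    rw [hAC, hCpc.connectedComponentIn hc] at this
    exact hCunb this
  · obtain ⟨c, hcC, hcB⟩ := Set.nonempty_iff_ne_empty.mpr hcb
    have hpiece : ∀ p ∈ A, ∃ U V : Set (Ed d),
        IsOpen U ∧ V = U ∩ A ∧ IsCompact V ∧ IsBounded V ∧ p ∈ V :=
      fun p hp => aux_bounded_clopen_piece hAcl hp (hcon p hp)
    choose! U V hUo hVe hVc hVb hpV using hpiece
    set T := A ∩ closedBall (0 : Ed d) R with hT
    have hTc : IsCompact T := (isCompact_closedBall _ _).inter_left hAcl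
    have hTA : T ⊆ A := inter_subset_left
    have hTcover : T ⊆ ⋃ p ∈ A, U p := by
      intro q hq
      have hqA : q ∈ A := hTA hq
      have : q ∈ V q := hpV q hqA
      rw [hVe q hqA] at this
      exact mem_biUnion hqA this.1
    obtain ⟨t, htA, htfin, hcov⟩ := hTc.elim_finite_subcover_image
      (fun p hp => hUo p hp) hTcover
    set Vt := ⋃ p ∈ t, V p with hVt
    set Ut := ⋃ p ∈ t, U p with hUt
    have hVtUt : Vt = Ut ∩ A := by
      rw [hVt, hUt, Set.iUnion₂_inter]
      exact Set.iUnion₂_congr fun p hp => hVe p (htA hp)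
    have hVtc : IsCompact Vt := htfin.isCompact_biUnion fun p hp => hVc p (htA hp)
    have hVtb : IsBounded Vt := (isBounded_biUnion htfin).mpr fun p hp => hVb p (htA hp)
    have hUto : IsOpen Ut := isOpen_biUnion fun p hp => hUo p (htA hp)
    have hTVt : T ⊆ Vt := by
      intro q hq
      rw [hVtUt]
      exact ⟨hcov hq, hTA hq⟩
    set P := Vt ∪ (C ∩ closedBall (0 : Ed d) R) with hP
    have hPC : P ⊆ C := by
      rintro z (hz | hz)
      · exact ((hVtUt ▸ hz).2).1
      · exact hz.1
    have hPeq : P = (Ut ∪ ball (0 : Ed d) R) ∩ C := by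
      apply Subset.antisymm
      · rintro z (hz | hz)
        · have hz' := hVtUt ▸ hz
          exact ⟨Or.inl hz'.1, hz'.2.1⟩
        · rcases lt_or_ge (dist z 0) R with hlt | hge
          · exact ⟨Or.inr hlt, hz.1⟩
          · have hzA : z ∈ A := ⟨hz.1, fun hb => absurd hb (not_lt.mpr hge)⟩
            have : z ∈ T := ⟨hzA, hz.2⟩
            exact ⟨Or.inl ((hVtUt ▸ hTVt this).1), hz.1⟩
      · rintro z ⟨hz1 | hz1, hz2⟩
        · rcases lt_or_ge (dist z 0) R with hlt | hge
          · exact Or.inr ⟨hz2, ball_subset_closedBall hlt⟩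
          · have hzA : z ∈ A := ⟨hz2, fun hb => absurd hb (not_lt.mpr hge)⟩
            left
            rw [hVtUt]
            exact ⟨hz1, hzA⟩
        · exact Or.inr ⟨hz2, ball_subset_closedBall hz1⟩
    have hPcl : IsClosed P := hVtc.isClosed.union (hCcl.inter Metric.isClosed_closedBall)
    haveI : PreconnectedSpace ↥C := Subtype.preconnectedSpace hCpc
    have hPsub_open : IsOpen ((Subtype.val : C → Ed d) ⁻¹' P) := by
      have : (Subtype.val : C → Ed d) ⁻¹' P =
          (Subtype.val : C → Ed d) ⁻¹' (Ut ∪ ball (0 : Ed d) R) := by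
        ext z
        constructor
        · intro hz
          exact ((hPeq ▸ hz) : _ ∈ (Ut ∪ ball (0 : Ed d) R) ∩ C).1
        · intro hz
          show z.val ∈ P
          rw [hPeq]
          exact ⟨hz, z.2⟩
      rw [this]
      exact (hUto.union isOpen_ball).preimage continuous_subtype_val
    have hPclop : IsClopen ((Subtype.val : C → Ed d) ⁻¹' P) :=
      ⟨hPcl.preimage continuous_subtype_val, hPsub_open⟩
    have hPne : ((Subtype.val : C → Ed d) ⁻¹' P).Nonempty :=
      ⟨⟨c, hcC⟩, Or.inr ⟨hcC, hcB⟩⟩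
    have huniv := hPclop.eq_univ hPne
    have hCsubP : C ⊆ P := by
      intro z hz
      have : (⟨z, hz⟩ : C) ∈ (Subtype.val : C → Ed d) ⁻¹' P := by
        rw [huniv]; trivial
      exact this
    exact hCunb ((hVtb.union isBounded_closedBall).subset
      (hCsubP.trans (union_subset_union_right _ inter_subset_right)))

end Helpers

open MeasureTheory Metric Bornology in
/-- if at least three distinct unbounded components of `{g ≥ ℓ}` meet
`B_r`, the shifted field `g + h` is at least `ℓ` on `B_r`, and the shift changes the
excursion set only locally, then the origin is an `R`-coarse trifurcation point of
`{g + h ≥ ℓ}` for some `R > 0`. -/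
theorem local_merging_yields_trifurcation
    {d : ℕ} (hd : 1 ≤ d) (g : Ed d → ℝ) (hg : Continuous g)
    (h : Ed d → ℝ) (hpos : ∀ x : Ed d, 0 ≤ h x)
    (ℓ r : ℝ) (hr : 0 < r)
    (ha : ∃ C₁ ∈ unbddComps {x : Ed d | ℓ ≤ g x},
          ∃ C₂ ∈ unbddComps {x : Ed d | ℓ ≤ g x},
          ∃ C₃ ∈ unbddComps {x : Ed d | ℓ ≤ g x},
            C₁ ≠ C₂ ∧ C₁ ≠ C₃ ∧ C₂ ≠ C₃ ∧
            (C₁ ∩ ball (0 : Ed d) r).Nonempty ∧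
            (C₂ ∩ ball (0 : Ed d) r).Nonempty ∧
            (C₃ ∩ ball (0 : Ed d) r).Nonempty)
    (hb : ∀ x ∈ ball (0 : Ed d) r, ℓ ≤ g x + h x)
    (hc : ∃ R' : ℝ, 0 < R' ∧
      PercEquiv ({x : Ed d | ℓ ≤ g x} \ ball (0 : Ed d) R')
        ({x : Ed d | ℓ ≤ g x + h x} \ ball (0 : Ed d) R')) :
    ∃ R : ℝ, 0 < R ∧
      IsCoarseTrifurcation {x : Ed d | ℓ ≤ g x + h x} R (0 : Ed d) := by
  classical
  obtain ⟨R', hR', hperc⟩ := hc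
  obtain ⟨C₁, hC₁, C₂, hC₂, C₃, hC₃, h12, h13, h23, hz₁, hz₂, hz₃⟩ := ha
  set F := {x : Ed d | ℓ ≤ g x} with hFdef
  set G := {x : Ed d | ℓ ≤ g x + h x} with hGdef
  have hFcl : IsClosed F := isClosed_le continuous_const hg
  have hFG : F ⊆ G := fun x hx => le_trans hx (le_add_of_nonneg_right (hpos x))
  set R := max r R' with hRdef
  have hrR : r ≤ R := le_max_left _ _
  have hR'R : R' ≤ R := le_max_right _ _
  have hR : 0 < R := lt_of_lt_of_le hr hrR
  have h0G : (0 : Ed d) ∈ G := hb 0 (mem_ball_self hr)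
  set D := connectedComponentIn G (0 : Ed d) with hDdef
  -- generic facts about each of the three components
  have key : ∀ C : Set (Ed d), C ∈ unbddComps F → (C ∩ ball (0 : Ed d) r).Nonempty →
      ∃ x, x ∈ C \ ball (0 : Ed d) R ∧ C ⊆ D ∧
        ¬ IsBounded (connectedComponentIn (C \ ball (0 : Ed d) R) x) := by
    rintro C ⟨⟨y, hyF, rfl⟩, hunb⟩ ⟨z, hzC, hzb⟩
    have hCcl : IsClosed (connectedComponentIn F y) :=
      aux_isClosed_connectedComponentIn hFcl
    have hCpc : IsPreconnected (connectedComponentIn F y) :=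
      isPreconnected_connectedComponentIn
    have hCD : connectedComponentIn F y ⊆ D := by
      have hu : IsPreconnected (connectedComponentIn F y ∪ ball (0 : Ed d) r) :=
        IsPreconnected.union z hzC hzb hCpc (convex_ball _ _).isPreconnected
      have hsub : connectedComponentIn F y ∪ ball (0 : Ed d) r ⊆ G :=
        Set.union_subset ((connectedComponentIn_subset F y).trans hFG) hb
      have h0mem : (0 : Ed d) ∈ connectedComponentIn F y ∪ ball (0 : Ed d) r :=
        Or.inr (mem_ball_self hr)
      exact Set.subset_union_left.trans (hu.subset_connectedComponentIn h0mem hsub)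
    obtain ⟨x, hx, hxunb⟩ := aux_exists_unbounded_comp_outside hCcl hCpc hunb R
    exact ⟨x, hx, hCD, hxunb⟩
  obtain ⟨⟨y₁, hy₁F, hC₁eq⟩, hC₁unb⟩ := hC₁
  obtain ⟨⟨y₂, hy₂F, hC₂eq⟩, hC₂unb⟩ := hC₂
  obtain ⟨⟨y₃, hy₃F, hC₃eq⟩, hC₃unb⟩ := hC₃
  subst hC₁eq; subst hC₂eq; subst hC₃eq
  obtain ⟨x₁, hx₁, hCD₁, hK₁⟩ := key _ ⟨⟨y₁, hy₁F, rfl⟩, hC₁unb⟩ hz₁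
  obtain ⟨x₂, hx₂, hCD₂, hK₂⟩ := key _ ⟨⟨y₂, hy₂F, rfl⟩, hC₂unb⟩ hz₂
  obtain ⟨x₃, hx₃, hCD₃, hK₃⟩ := key _ ⟨⟨y₃, hy₃F, rfl⟩, hC₃unb⟩ hz₃
  have hx₁D : x₁ ∈ D \ ball (0 : Ed d) R := ⟨hCD₁ hx₁.1, hx₁.2⟩
  have hx₂D : x₂ ∈ D \ ball (0 : Ed d) R := ⟨hCD₂ hx₂.1, hx₂.2⟩
  have hx₃D : x₃ ∈ D \ ball (0 : Ed d) R := ⟨hCD₃ hx₃.1, hx₃.2⟩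
  -- the three big components
  have hbig : ∀ (y x : Ed d), x ∈ connectedComponentIn F y \ ball (0 : Ed d) R →
      connectedComponentIn F y ⊆ D →
      ¬ IsBounded (connectedComponentIn (connectedComponentIn F y \ ball (0 : Ed d) R) x) →
      ¬ IsBounded (connectedComponentIn (D \ ball (0 : Ed d) R) x) := by
    intro y x hx hCD hK hbdd
    exact hK (hbdd.subset (connectedComponentIn_mono x (Set.diff_subset_diff_left hCD)))
  -- distinctness
  have hdis : ∀ (ya yb xa xb : Ed d),
      xa ∈ connectedComponentIn F ya \ ball (0 : Ed d) R →
      xb ∈ connectedComponentIn F yb \ ball (0 : Ed d) R →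
      xa ∈ D \ ball (0 : Ed d) R → xb ∈ D \ ball (0 : Ed d) R →
      connectedComponentIn F ya ≠ connectedComponentIn F yb →
      connectedComponentIn (D \ ball (0 : Ed d) R) xa ≠
        connectedComponentIn (D \ ball (0 : Ed d) R) xb := by
    intro ya yb xa xb hxa hxb hxaD hxbD hne heq
    apply hne
    have hxaF : xa ∈ F \ ball (0 : Ed d) R' :=
      ⟨connectedComponentIn_subset F ya hxa.1,
        fun hball => hxa.2 (ball_subset_ball hR'R hball)⟩
    have hxbF : xb ∈ F \ ball (0 : Ed d) R' :=
      ⟨connectedComponentIn_subset F yb hxb.1,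
        fun hball => hxb.2 (ball_subset_ball hR'R hball)⟩
    have hxbmem : xb ∈ connectedComponentIn (D \ ball (0 : Ed d) R) xa :=
      heq ▸ mem_connectedComponentIn hxbD
    have hsubG : D \ ball (0 : Ed d) R ⊆ G \ ball (0 : Ed d) R' :=
      Set.diff_subset_diff (connectedComponentIn_subset G 0) (ball_subset_ball hR'R)
    have h2 : xb ∈ connectedComponentIn (G \ ball (0 : Ed d) R') xa :=
      connectedComponentIn_mono xa hsubG hxbmem
    have h3 : connectedComponentIn (G \ ball (0 : Ed d) R') xa =
        connectedComponentIn (G \ ball (0 : Ed d) R') xb := connectedComponentIn_eq h2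
    have h4 : connectedComponentIn (F \ ball (0 : Ed d) R') xa =
        connectedComponentIn (F \ ball (0 : Ed d) R') xb :=
      hperc.2.1 xa hxaF xb hxbF h3
    have h5 : xb ∈ connectedComponentIn F xa := by
      have hmem : xb ∈ connectedComponentIn (F \ ball (0 : Ed d) R') xb :=
        mem_connectedComponentIn hxbF
      rw [← h4] at hmem
      exact connectedComponentIn_mono xa Set.diff_subset hmem
    calc connectedComponentIn F ya = connectedComponentIn F xa :=
          connectedComponentIn_eq hxa.1
      _ = connectedComponentIn F xb := connectedComponentIn_eq h5
      _ = connectedComponentIn F yb := (connectedComponentIn_eq hxb.1).symm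
  have hne12 := hdis y₁ y₂ x₁ x₂ hx₁ hx₂ hx₁D hx₂D h12
  have hne13 := hdis y₁ y₃ x₁ x₃ hx₁ hx₃ hx₁D hx₃D h13
  have hne23 := hdis y₂ y₃ x₂ x₃ hx₂ hx₃ hx₂D hx₃D h23
  -- assemble
  refine ⟨R, hR, h0G, ?_, ?_⟩
  · intro hDbdd
    exact hC₁unb (hDbdd.subset hCD₁)
  · have hmem : ∀ (y x : Ed d), x ∈ connectedComponentIn F y \ ball (0 : Ed d) R →
        connectedComponentIn F y ⊆ D → x ∈ D \ ball (0 : Ed d) R →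
        ¬ IsBounded (connectedComponentIn (connectedComponentIn F y \ ball (0 : Ed d) R) x) →
        connectedComponentIn (D \ ball (0 : Ed d) R) x ∈
          unbddComps (D \ ball (0 : Ed d) R) := by
      intro y x hx hCD hxD hK
      exact ⟨⟨x, hxD, rfl⟩, hbig y x hx hCD hK⟩
    have hsub3 : {connectedComponentIn (D \ ball (0 : Ed d) R) x₁,
        connectedComponentIn (D \ ball (0 : Ed d) R) x₂,
        connectedComponentIn (D \ ball (0 : Ed d) R) x₃} ⊆
        unbddComps (D \ ball (0 : Ed d) R) := by
      rintro K (rfl | rfl | rfl)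
      · exact hmem y₁ x₁ hx₁ hCD₁ hx₁D hK₁
      · exact hmem y₂ x₂ hx₂ hCD₂ hx₂D hK₂
      · exact hmem y₃ x₃ hx₃ hCD₃ hx₃D hK₃
    have h3card : ({connectedComponentIn (D \ ball (0 : Ed d) R) x₁,
        connectedComponentIn (D \ ball (0 : Ed d) R) x₂,
        connectedComponentIn (D \ ball (0 : Ed d) R) x₃} :
          Set (Set (Ed d))).encard = 3 := by
      rw [Set.encard_insert_of_notMem (by simp [hne12, hne13]),
        Set.encard_pair hne23]
      rfl
    calc (3 : ℕ∞) = _ := h3card.symm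
      _ ≤ _ := Set.encard_le_encard hsub3
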